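/- In the polynomial ring A = ℂ[x₁₁, x₁₂, x₁₃, x₂₁, x₂₂, x₂₃, x₃₁, x₃₂, x₃₃] in nine variables, both of the following ideals are prime: p₁ = ⟨x₁₁, x₁₂, x₂₂, x₃₁, x₃₂, x₃₃⟩ and p₂ = ⟨x₃₁, x₃₂, x₃₃, x₁₁ + x₂₂, x₁₂x₂₁ + x₂₂², x₁₂x₂₃ − x₁₃x₂₂, x₁₃x₂₁ + x₂₂x₂₃⟩. -/

import Mathlib

open MvPolynomial

noncomputable section

abbrev A9 := MvPolynomial (Fin 3 × Fin 3) ℂ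

def p1 : Ideal A9 := Ideal.span {(X (0, 0) : A9), X (0, 1), X (1, 1), X (2, 0), X (2, 1), X (2, 2)}

def pi1 : A9 →ₐ[ℂ] MvPolynomial (Fin 3) ℂ :=
  aeval fun p => ![![0, 0, X 0], ![X 1, 0, X 2], ![0, 0, 0]] p.1 p.2

def rho1 : MvPolynomial (Fin 3) ℂ →ₐ[ℂ] A9 := aeval ![X (0,2), X (1,0), X (1,2)]

lemma sub_mem_p1 (f : A9) : f - rho1 (pi1 f) ∈ p1 := by
  have h : (Ideal.Quotient.mkₐ ℂ p1).comp (rho1.comp pi1) = Ideal.Quotient.mkₐ ℂ p1 := by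
    apply MvPolynomial.algHom_ext
    rintro ⟨i, j⟩
    fin_cases i <;> fin_cases j <;>
      simp [pi1, rho1, Ideal.Quotient.mkₐ_eq_mk] <;>
      exact (Ideal.Quotient.eq_zero_iff_mem.mpr (Ideal.subset_span (by simp [p1]))).symm
  have hf : Ideal.Quotient.mk p1 (rho1 (pi1 f)) = Ideal.Quotient.mk p1 f := by
    simpa using AlgHom.congr_fun h f
  have := Ideal.Quotient.eq.mp hf
  rw [← neg_sub]; exact neg_mem this

lemma p1_eq_ker : p1 = RingHom.ker pi1.toRingHom := by
  apply le_antisymm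
  · rw [p1, Ideal.span_le]
    intro g hg
    simp only [Set.mem_insert_iff, Set.mem_singleton_iff] at hg
    rcases hg with h|h|h|h|h|h <;> subst h <;>
      (simp [RingHom.mem_ker, pi1]; try rfl)
  · intro f hf
    rw [RingHom.mem_ker] at hf
    have h2 : pi1 f = 0 := hf
    have := sub_mem_p1 f
    rwa [h2, map_zero, sub_zero] at this

lemma p1_prime : p1.IsPrime := by
  rw [p1_eq_ker]; exact RingHom.ker_isPrime _

abbrev B5 := MvPolynomial (Fin 5) ℂ
abbrev B4 := MvPolynomial (Fin 4) ℂ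

def psi : B5 →ₐ[ℂ] B4 :=
  aeval ![-(X 0 ^ 2 * X 2), X 0 * X 3, X 1 ^ 2 * X 2, -(X 0 * X 1 * X 2), X 1 * X 3]

def iota (s : Fin 5 →₀ ℕ) : Fin 4 →₀ ℕ :=
  Finsupp.equivFunOnFinite.symm ![2 * s 0 + s 1 + s 3, 2 * s 2 + s 3 + s 4, s 0 + s 2 + s 3, s 1 + s 4]

lemma iota_apply (s : Fin 5 →₀ ℕ) :
    iota s 0 = 2 * s 0 + s 1 + s 3 ∧ iota s 1 = 2 * s 2 + s 3 + s 4 ∧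
    iota s 2 = s 0 + s 2 + s 3 ∧ iota s 3 = s 1 + s 4 := by
  refine ⟨?_, ?_, ?_, ?_⟩ <;> simp [iota]

lemma monomial_iota (s : Fin 5 →₀ ℕ) :
    (monomial (iota s) (1 : ℂ)) =
      X 0 ^ (2 * s 0 + s 1 + s 3) * X 1 ^ (2 * s 2 + s 3 + s 4) *
        X 2 ^ (s 0 + s 2 + s 3) * X 3 ^ (s 1 + s 4) := by
  rw [monomial_eq]
  rw [Finsupp.prod_fintype _ _ (fun i => pow_zero _)]
  simp [Fin.prod_univ_four, iota, mul_assoc]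

lemma psi_monomial_one (s : Fin 5 →₀ ℕ) :
    psi (monomial s (1 : ℂ)) = ((-1 : ℂ) ^ (s 0 + s 3)) • monomial (iota s) (1 : ℂ) := by
  have h3 : psi (monomial s (1:ℂ)) =
      (psi (X 0)) ^ s 0 * (psi (X 1)) ^ s 1 * (psi (X 2)) ^ s 2 *
        (psi (X 3)) ^ s 3 * (psi (X 4)) ^ s 4 := by
    rw [monomial_eq, map_mul]
    rw [Finsupp.prod_fintype _ _ (fun i => pow_zero _)]
    simp [Fin.prod_univ_five, mul_assoc, C_1]
  have e0 : psi (X 0) = -(X 0 ^ 2 * X 2) := by simp [psi]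
  have e1 : psi (X 1) = X 0 * X 3 := by simp [psi]
  have e2 : psi (X 2) = X 1 ^ 2 * X 2 := by simp [psi]
  have e3 : psi (X 3) = -(X 0 * X 1 * X 2) := by simp [psi]
  have e4 : psi (X 4) = X 1 * X 3 := by simp [psi]
  rw [h3, e0, e1, e2, e3, e4, monomial_iota, smul_eq_C_mul, map_pow, map_neg, C_1, pow_add]
  ring

lemma psi_monomial (s : Fin 5 →₀ ℕ) (c : ℂ) :
    psi (monomial s c) = ((-1 : ℂ) ^ (s 0 + s 3) * c) • monomial (iota s) (1 : ℂ) := by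
  have h1 : monomial s c = c • monomial s (1:ℂ) := by
    rw [smul_monomial, smul_eq_mul, mul_one]
  rw [h1, map_smul, psi_monomial_one, smul_smul, mul_comm]

def SS : Set (Fin 5 →₀ ℕ) :=
  {s | (s 2 = 0 ∧ s 4 = 0) ∨ (s 0 = 0 ∧ s 2 = 0) ∨ (s 0 = 0 ∧ s 1 = 0)}

lemma iota_injOn : ∀ s ∈ SS, ∀ s' ∈ SS, iota s = iota s' → s = s' := by
  intro s hs s' hs' h
  have h0 := (Finsupp.ext_iff.mp h) 0
  have h1 := (Finsupp.ext_iff.mp h) 1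
  have h2 := (Finsupp.ext_iff.mp h) 2
  have h3 := (Finsupp.ext_iff.mp h) 3
  simp only [iota, Finsupp.coe_equivFunOnFinite_symm, Matrix.cons_val_zero,
    Matrix.cons_val_one, Matrix.head_cons, Matrix.cons_val_two, Matrix.tail_cons,
    Matrix.cons_val_three] at h0 h1 h2 h3
  have he : s 0 = s' 0 ∧ s 1 = s' 1 ∧ s 2 = s' 2 ∧ s 3 = s' 3 ∧ s 4 = s' 4 := by
    rcases hs with ⟨a1,a2⟩|⟨a1,a2⟩|⟨a1,a2⟩ <;>
      rcases hs' with ⟨b1,b2⟩|⟨b1,b2⟩|⟨b1,b2⟩ <;>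
      refine ⟨by omega, by omega, by omega, by omega, by omega⟩
  obtain ⟨q0,q1,q2,q3,q4⟩ := he
  refine Finsupp.ext fun i => ?_
  fin_cases i
  exacts [q0, q1, q2, q3, q4]

lemma normal_inj (n : B5) (hn : ∀ s ∈ n.support, s ∈ SS) (h : psi n = 0) : n = 0 := by
  ext s
  rw [coeff_zero]
  by_cases hs : s ∈ n.support
  · have hsS := hn s hs
    have h2 : coeff (iota s) (psi n) = 0 := by rw [h, coeff_zero]
    rw [show psi n = psi (∑ s' ∈ n.support, monomial s' (coeff s' n)) from by
        rw [← as_sum n]] at h2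
    rw [map_sum, coeff_sum] at h2
    simp only [psi_monomial, coeff_smul, coeff_monomial, smul_eq_mul] at h2
    have h3 : (∑ x ∈ n.support,
        (-1:ℂ) ^ (x 0 + x 3) * coeff x n * if iota x = iota s then 1 else 0)
        = (-1:ℂ) ^ (s 0 + s 3) * coeff s n := by
      rw [Finset.sum_eq_single s]
      · simp
      · intro s' hs' he
        have h5 : ¬ iota s' = iota s := fun hh => he (iota_injOn s' (hn s' hs') s hsS hh)
        simp [h5]
      · exact fun habs => absurd hs habs
    rw [h3] at h2
    have h4 : ((-1:ℂ) ^ (s 0 + s 3)) ≠ 0 := pow_ne_zero _ (by norm_num)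
    exact (mul_eq_zero.mp h2).resolve_left h4
  · exact notMem_support_iff.mp hs

def Jideal : Ideal B5 :=
  Ideal.span {X 0 * X 2 + X 3 ^ 2, X 0 * X 4 - X 1 * X 3, X 1 * X 2 + X 3 * X 4}

def Jprime : Submodule ℂ B5 :=
  (Jideal.restrictScalars ℂ) ⊔ Submodule.span ℂ ((fun s => monomial s (1 : ℂ)) '' SS)

lemma exists_decomp (s : Fin 5 →₀ ℕ) (i j : Fin 5) (hi : 0 < s i) (hj : 0 < s j)
    (hij : i ≠ j) : ∃ t : Fin 5 →₀ ℕ, s = t + Finsupp.single i 1 + Finsupp.single j 1 := by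
  refine ⟨s - Finsupp.single i 1 - Finsupp.single j 1, ?_⟩
  ext k
  simp only [Finsupp.add_apply, Finsupp.tsub_apply]
  rcases eq_or_ne i k with rfl | h1
  · rcases eq_or_ne j i with rfl | h2
    · exact absurd rfl hij
    · simp only [Finsupp.single_eq_same, Finsupp.single_eq_of_ne' h2]
      omega
  · rcases eq_or_ne j k with rfl | h2
    · simp only [Finsupp.single_eq_same, Finsupp.single_eq_of_ne' h1]
      omega
    · simp only [Finsupp.single_eq_of_ne' h1, Finsupp.single_eq_of_ne' h2]
      omega

lemma mono_add (u v : Fin 5 →₀ ℕ) :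
    monomial (u + v) (1:ℂ) = monomial u 1 * monomial v 1 := by
  rw [monomial_mul, one_mul]

lemma X_mono (i : Fin 5) : (X i : B5) = monomial (Finsupp.single i 1) 1 := by
  rw [← X_pow_eq_monomial, pow_one]

lemma mono_mem (a b : ℕ) : ∀ s : Fin 5 →₀ ℕ, s 0 = a → s 1 = b →
    monomial s (1 : ℂ) ∈ Jprime := by
  induction a using Nat.strong_induction_on generalizing b with
  | _ a iha =>
  induction b using Nat.strong_induction_on with
  | _ b ihb =>
  intro s h0 h1
  by_cases c1 : 0 < s 0 ∧ 0 < s 2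
  · obtain ⟨t, ht⟩ := exists_decomp s 0 2 c1.1 c1.2 (by decide)
    have e0 : s 0 = t 0 + 1 := by
      have := DFunLike.congr_fun ht 0; simpa [Finsupp.single_apply] using this
    have e1 : s 1 = t 1 := by
      have := DFunLike.congr_fun ht 1; simpa [Finsupp.single_apply] using this
    have key : monomial s (1:ℂ) =
        (X 0 * X 2 + X 3 ^ 2) * monomial t 1 - monomial (t + Finsupp.single 3 2) 1 := by
      rw [ht]
      rw [show (X 3 : B5) ^ 2 = monomial (Finsupp.single 3 2) 1 from X_pow_eq_monomial]
      simp only [X_mono, mono_add]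
      ring
    rw [key]
    have hnew0 : (t + Finsupp.single 3 2 : Fin 5 →₀ ℕ) 0 = a - 1 := by
      simp [Finsupp.single_apply]; omega
    refine sub_mem
      (Submodule.mem_sup_left (Ideal.mul_mem_right _ _ (Ideal.subset_span (by simp))))
      (iha (a - 1) (by omega) ((t + Finsupp.single 3 2 : Fin 5 →₀ ℕ) 1) _ hnew0 rfl)
  · by_cases c2 : 0 < s 0 ∧ 0 < s 4
    · obtain ⟨t, ht⟩ := exists_decomp s 0 4 c2.1 c2.2 (by decide)
      have e0 : s 0 = t 0 + 1 := by
        have := DFunLike.congr_fun ht 0; simpa [Finsupp.single_apply] using this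
      have key : monomial s (1:ℂ) =
          (X 0 * X 4 - X 1 * X 3) * monomial t 1
            + monomial (t + (Finsupp.single 1 1 + Finsupp.single 3 1)) 1 := by
        rw [ht]
        simp only [X_mono, mono_add]
        ring
      rw [key]
      have hnew0 : (t + (Finsupp.single 1 1 + Finsupp.single 3 1) : Fin 5 →₀ ℕ) 0 = a - 1 := by
        simp [Finsupp.single_apply]; omega
      exact add_mem
        (Submodule.mem_sup_left (Ideal.mul_mem_right _ _ (Ideal.subset_span (by simp))))
        (iha (a - 1) (by omega)
          ((t + (Finsupp.single 1 1 + Finsupp.single 3 1) : Fin 5 →₀ ℕ) 1) _ hnew0 rfl)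
    · by_cases c3 : 0 < s 1 ∧ 0 < s 2
      · obtain ⟨t, ht⟩ := exists_decomp s 1 2 c3.1 c3.2 (by decide)
        have e0 : s 0 = t 0 := by
          have := DFunLike.congr_fun ht 0; simpa [Finsupp.single_apply] using this
        have e1 : s 1 = t 1 + 1 := by
          have := DFunLike.congr_fun ht 1; simpa [Finsupp.single_apply] using this
        have key : monomial s (1:ℂ) =
            (X 1 * X 2 + X 3 * X 4) * monomial t 1
              - monomial (t + (Finsupp.single 3 1 + Finsupp.single 4 1)) 1 := by
          rw [ht]
          simp only [X_mono, mono_add]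
          ring
        rw [key]
        have hnew0 : (t + (Finsupp.single 3 1 + Finsupp.single 4 1) : Fin 5 →₀ ℕ) 0 = a := by
          simp [Finsupp.single_apply]; omega
        have hnew1 : (t + (Finsupp.single 3 1 + Finsupp.single 4 1) : Fin 5 →₀ ℕ) 1 = b - 1 := by
          simp [Finsupp.single_apply]; omega
        exact sub_mem
          (Submodule.mem_sup_left (Ideal.mul_mem_right _ _ (Ideal.subset_span (by simp))))
          (ihb (b - 1) (by omega) _ hnew0 hnew1)
      · have hsS : s ∈ SS := by
          simp only [SS, Set.mem_setOf_eq]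
          omega
        exact Submodule.mem_sup_right (Submodule.subset_span ⟨s, hsS, rfl⟩)

lemma all_mem_Jprime (g : B5) : g ∈ Jprime := by
  induction g using MvPolynomial.induction_on' with
  | monomial s c =>
    have hc : monomial s c = c • monomial s (1:ℂ) := by
      rw [smul_monomial, smul_eq_mul, mul_one]
    rw [hc]
    exact Submodule.smul_mem _ _ (mono_mem (s 0) (s 1) s rfl rfl)
  | add p q hp hq => exact add_mem hp hq

lemma support_SS (n : B5)
    (hn : n ∈ Submodule.span ℂ ((fun s => monomial s (1:ℂ)) '' SS)) :
    ∀ s ∈ n.support, s ∈ SS := by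
  induction hn using Submodule.span_induction with
  | mem x hx =>
    obtain ⟨s, hs, rfl⟩ := hx
    intro s' hs'
    have := support_monomial_subset hs'
    simp at this
    rwa [this]
  | zero => simp
  | add x y hx hy ihx ihy =>
    intro s hs
    rcases Finset.mem_union.mp (Finsupp.support_add hs) with h | h
    exacts [ihx s h, ihy s h]
  | smul c x hx ihx =>
    intro s hs
    exact ihx s (Finsupp.support_smul hs)

lemma J_le_ker : ∀ g ∈ Jideal, psi g = 0 := by
  intro g hg
  rw [show (0 : B4) = psi.toRingHom 0 from (map_zero _).symm] at *
  have : Jideal ≤ RingHom.ker psi.toRingHom := by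
    rw [Jideal, Ideal.span_le]
    intro f hf
    simp only [Set.mem_insert_iff, Set.mem_singleton_iff] at hf
    rcases hf with h|h|h <;> subst h <;>
      (simp only [RingHom.mem_ker, AlgHom.toRingHom_eq_coe, RingHom.coe_coe, map_add, map_sub,
        map_mul, map_pow]; simp [psi]; ring)
  simpa using this hg

lemma ker_psi_le (g : B5) (h : psi g = 0) : g ∈ Jideal := by
  obtain ⟨j, hj, n, hn, rfl⟩ := Submodule.mem_sup.mp (all_mem_Jprime g)
  have hjJ : j ∈ Jideal := hj
  have hpsin : psi n = 0 := by
    have := J_le_ker j hjJ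
    rw [map_add, this, zero_add] at h
    exact h
  rw [normal_inj n (support_SS n hn) hpsin, add_zero]
  exact hjJ


def p2 : Ideal A9 := Ideal.span {(X (2, 0) : A9), X (2, 1), X (2, 2),
    X (0, 0) + X (1, 1),
    X (0, 1) * X (1, 0) + X (1, 1) ^ 2,
    X (0, 1) * X (1, 2) - X (0, 2) * X (1, 1),
    X (0, 2) * X (1, 0) + X (1, 1) * X (1, 2)}

def tau : A9 →ₐ[ℂ] B5 :=
  aeval fun p => ![![-X 3, X 0, X 1], ![X 2, X 3, X 4], ![0, 0, 0]] p.1 p.2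

def rho : B5 →ₐ[ℂ] A9 := aeval ![X (0,1), X (0,2), X (1,0), X (1,1), X (1,2)]

lemma sub_mem_p2 (f : A9) : f - rho (tau f) ∈ p2 := by
  have h : (Ideal.Quotient.mkₐ ℂ p2).comp (rho.comp tau) = Ideal.Quotient.mkₐ ℂ p2 := by
    apply MvPolynomial.algHom_ext
    rintro ⟨i, j⟩
    fin_cases i <;> fin_cases j <;>
      simp [tau, rho, Ideal.Quotient.mkₐ_eq_mk]
    · rw [← map_neg, Ideal.Quotient.eq]
      show -(X (1,1) : A9) - X (0,0) ∈ p2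
      rw [show -(X (1,1) : A9) - X (0,0) = -(X (0,0) + X (1,1)) from by ring]
      exact neg_mem (Ideal.subset_span (by simp [p2]))
    all_goals
      exact (Ideal.Quotient.eq_zero_iff_mem.mpr (Ideal.subset_span (by simp [p2]))).symm
  have hf : Ideal.Quotient.mk p2 (rho (tau f)) = Ideal.Quotient.mk p2 f := by
    simpa using AlgHom.congr_fun h f
  have := Ideal.Quotient.eq.mp hf
  rw [← neg_sub]; exact neg_mem this

lemma rho_J (g : B5) (hg : g ∈ Jideal) : rho g ∈ p2 := by
  have h1 : rho g ∈ Ideal.map rho.toRingHom Jideal := Ideal.mem_map_of_mem _ hg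
  have h2 : Ideal.map rho.toRingHom Jideal ≤ p2 := by
    rw [Jideal, Ideal.map_span, Ideal.span_le]
    rintro f ⟨x, hx, rfl⟩
    simp only [Set.mem_insert_iff, Set.mem_singleton_iff] at hx
    rcases hx with h|h|h <;> subst h <;>
      (apply Ideal.subset_span; simp [rho]; try simp [Prod.ext_iff])
  exact h2 h1

def phi : A9 →ₐ[ℂ] B4 := psi.comp tau

lemma p2_eq_ker : p2 = RingHom.ker phi.toRingHom := by
  apply le_antisymm
  · rw [p2, Ideal.span_le]
    intro g hg
    simp only [Set.mem_insert_iff, Set.mem_singleton_iff] at hg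
    rcases hg with h|h|h|h|h|h|h <;> subst h <;>
      (simp only [RingHom.mem_ker, AlgHom.toRingHom_eq_coe, RingHom.coe_coe, phi,
        AlgHom.comp_apply, map_add, map_sub, map_mul, map_pow]; simp [tau, psi]; try ring)
  · intro f hf
    have h2 : psi (tau f) = 0 := hf
    have h3 : tau f ∈ Jideal := ker_psi_le _ h2
    have h4 := rho_J _ h3
    have := sub_mem_p2 f
    have h5 := add_mem this h4
    rwa [sub_add_cancel] at h5

lemma p2_prime : p2.IsPrime := by
  rw [p2_eq_ker]; exact RingHom.ker_isPrime _

end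

/-- In `A = ℂ[x₁₁, …, x₃₃]` (variable `xᵢⱼ` is `X (i-1, j-1)`), the ideals
`p₁ = ⟨x₁₁, x₁₂, x₂₂, x₃₁, x₃₂, x₃₃⟩` and
`p₂ = ⟨x₃₁, x₃₂, x₃₃, x₁₁+x₂₂, x₁₂x₂₁+x₂₂², x₁₂x₂₃−x₁₃x₂₂, x₁₃x₂₁+x₂₂x₂₃⟩`
are both prime. -/
theorem prime_ideals_p1_p2 :
    (Ideal.span {(X (0, 0) : MvPolynomial (Fin 3 × Fin 3) ℂ), X (0, 1), X (1, 1),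
        X (2, 0), X (2, 1), X (2, 2)}).IsPrime ∧
    (Ideal.span {(X (2, 0) : MvPolynomial (Fin 3 × Fin 3) ℂ), X (2, 1), X (2, 2),
        X (0, 0) + X (1, 1),
        X (0, 1) * X (1, 0) + X (1, 1) ^ 2,
        X (0, 1) * X (1, 2) - X (0, 2) * X (1, 1),
        X (0, 2) * X (1, 0) + X (1, 1) * X (1, 2)}).IsPrime := by
  exact ⟨p1_prime, p2_prime⟩
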